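/- Fix S, K, σ > 0 with let Φ be the standard normal cumulative distribution function, and for τ > 0 set d1(τ) = (ln(S/K) + (σ²/2)τ)/(σ√τ) and d2(τ) = d1(τ) − σ√τ. Then the RMM-01 LPT value V(τ) = S·Φ(−d1(τ)) + K·Φ(d2(τ)) tends to min(S, K) as τ tends to 0 from the right. That is, at expiry the LPT replicates the covered call payoff min(S, K). -/

import Mathlib

open Real Filter

/-- The cumulative distribution function of the standard normal distribution
(Gaussian measure on ℝ with mean 0 and variance 1). -/
noncomputable def Φ (x : ℝ) : ℝ :=
  (ProbabilityTheory.gaussianReal 0 1 (Set.Iic x)).toReal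

section aux
open MeasureTheory ProbabilityTheory

lemma Phi_eq_cdf : Φ = ProbabilityTheory.cdf (gaussianReal 0 1) :=
  funext fun x => (ProbabilityTheory.cdf_eq_real (gaussianReal 0 1) x).symm

lemma Phi_atTop : Tendsto Φ atTop (nhds 1) := by
  rw [Phi_eq_cdf]; exact ProbabilityTheory.tendsto_cdf_atTop _

lemma Phi_atBot : Tendsto Φ atBot (nhds 0) := by
  rw [Phi_eq_cdf]; exact ProbabilityTheory.tendsto_cdf_atBot _

lemma gauss_singleton (x : ℝ) : gaussianReal 0 1 {x} = 0 :=
  gaussianReal_absolutelyContinuous 0 one_ne_zero (measure_singleton x)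

lemma Phi_continuous : Continuous Φ := by
  rw [Phi_eq_cdf]
  set f := ProbabilityTheory.cdf (gaussianReal 0 1)
  rw [continuous_iff_continuousAt]
  intro x
  rw [f.mono.continuousAt_iff_leftLim_eq_rightLim, f.rightLim_eq]
  have h1 : f.measure {x} = ENNReal.ofReal (f x - Function.leftLim f x) :=
    f.measure_singleton x
  rw [ProbabilityTheory.measure_cdf, gauss_singleton] at h1
  have h2 := f.mono.leftLim_le (le_refl x)
  have h3 : f x - Function.leftLim f x ≤ 0 := by
    by_contra h
    push_neg at h
    rw [eq_comm, ENNReal.ofReal_eq_zero] at h1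
    linarith
  linarith

lemma Phi_zero : Φ 0 = 1 / 2 := by
  set μ := gaussianReal 0 1 with hμ
  have hmap : μ.map (fun x => (-1 : ℝ) * x) = μ := by
    rw [hμ, gaussianReal_map_const_mul]
    norm_num
  have hIci : μ (Set.Ici 0) = μ (Set.Iic 0) := by
    conv_rhs => rw [← hmap]
    rw [Measure.map_apply (by fun_prop) measurableSet_Iic]
    congr 1
    ext x
    simp [neg_le, Set.mem_Ici, Set.mem_Iic]
  have hIoi : μ (Set.Ioi 0) = μ (Set.Ici 0) := by
    have : Set.Ici (0:ℝ) = Set.Ioi 0 ∪ {0} := by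
      ext x; simp [le_iff_lt_or_eq, or_comm, eq_comm]
    rw [this]
    refine le_antisymm (measure_mono Set.subset_union_left) ?_ |>.symm |>.symm
    calc μ (Set.Ioi 0 ∪ {0}) ≤ μ (Set.Ioi 0) + μ {0} := measure_union_le _ _
      _ = μ (Set.Ioi 0) := by rw [gauss_singleton, add_zero]
  have hsum : μ (Set.Iic 0) + μ (Set.Ioi 0) = 1 := by
    rw [← measure_union (by simp [Set.disjoint_left]) measurableSet_Ioi]
    simp [Set.Iic_union_Ioi]
  rw [hIoi, hIci] at hsum
  have hne : μ (Set.Iic 0) ≠ ⊤ := measure_ne_top _ _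
  have := congrArg ENNReal.toReal hsum
  rw [ENNReal.toReal_add hne hne, ENNReal.toReal_one] at this
  simp only [Φ]
  linarith

end aux

/-- As τ → 0⁺ the RMM-01 LPT value V(τ) = S·Φ(−d1(τ)) + K·Φ(d2(τ)) tends to the
covered call payoff min(S, K). -/
theorem lpt_value_tendsto_covered_call (S K σ : ℝ) (hS : 0 < S) (hK : 0 < K) (hσ : 0 < σ)
    (d1 d2 V : ℝ → ℝ)
    (hd1 : ∀ τ, d1 τ = (Real.log (S / K) + (σ ^ 2 / 2) * τ) / (σ * Real.sqrt τ))
    (hd2 : ∀ τ, d2 τ = d1 τ - σ * Real.sqrt τ)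
    (hV : ∀ τ, V τ = S * Φ (-(d1 τ)) + K * Φ (d2 τ)) :
    Filter.Tendsto V (nhdsWithin 0 (Set.Ioi 0)) (nhds (min S K)) := by
  set L := Real.log (S / K) with hL
  -- sqrt tends to 0 within Ioi 0
  have hsq : Tendsto (fun τ : ℝ => Real.sqrt τ) (nhdsWithin 0 (Set.Ioi 0))
      (nhdsWithin 0 (Set.Ioi 0)) := by
    rw [tendsto_nhdsWithin_iff]
    constructor
    · have h0 : Tendsto (fun τ : ℝ => Real.sqrt τ) (nhds 0) (nhds (Real.sqrt 0)) :=
        Real.continuous_sqrt.tendsto 0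
      have := h0.mono_left (nhdsWithin_le_nhds (s := Set.Ioi 0))
      simpa using this
    · filter_upwards [self_mem_nhdsWithin] with τ hτ
      exact Real.sqrt_pos.2 hτ
  have hsq0 : Tendsto (fun τ : ℝ => Real.sqrt τ) (nhdsWithin 0 (Set.Ioi 0)) (nhds 0) :=
    hsq.mono_right nhdsWithin_le_nhds
  have hσs : Tendsto (fun τ : ℝ => -(σ * Real.sqrt τ)) (nhdsWithin 0 (Set.Ioi 0)) (nhds 0) := by
    have := (hsq0.const_mul σ).neg
    simpa using this
  -- representation of d1 on Ioi 0
  have hrep : ∀ᶠ τ in nhdsWithin 0 (Set.Ioi 0),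
      d1 τ = (L / σ) * (Real.sqrt τ)⁻¹ + (σ / 2) * Real.sqrt τ := by
    filter_upwards [self_mem_nhdsWithin] with τ hτ
    have hτ' : (0:ℝ) < τ := hτ
    have hs : 0 < Real.sqrt τ := Real.sqrt_pos.2 hτ'
    rw [hd1]
    field_simp
    ring_nf
    rw [Real.sq_sqrt hτ'.le]
  have hinv : Tendsto (fun τ : ℝ => (Real.sqrt τ)⁻¹) (nhdsWithin 0 (Set.Ioi 0)) atTop :=
    tendsto_inv_nhdsGT_zero.comp hsq
  have hterm2 : Tendsto (fun τ : ℝ => (σ / 2) * Real.sqrt τ) (nhdsWithin 0 (Set.Ioi 0))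
      (nhds 0) := by
    have := hsq0.const_mul (σ / 2)
    simpa using this
  -- final assembly helper
  have key : ∀ a b : ℝ,
      Tendsto (fun τ => Φ (-(d1 τ))) (nhdsWithin 0 (Set.Ioi 0)) (nhds a) →
      Tendsto (fun τ => Φ (d2 τ)) (nhdsWithin 0 (Set.Ioi 0)) (nhds b) →
      S * a + K * b = min S K →
      Tendsto V (nhdsWithin 0 (Set.Ioi 0)) (nhds (min S K)) := by
    intro a b h1 h2 hab
    have : Tendsto (fun τ => S * Φ (-(d1 τ)) + K * Φ (d2 τ)) (nhdsWithin 0 (Set.Ioi 0))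
        (nhds (S * a + K * b)) := (h1.const_mul S).add (h2.const_mul K)
    rw [hab] at this
    exact this.congr fun τ => (hV τ).symm
  rcases lt_trichotomy S K with h | h | h
  · -- S < K : L < 0, d1 → -∞
    have hLneg : L / σ < 0 := div_neg_of_neg_of_pos (Real.log_neg (div_pos hS hK)
      ((div_lt_one hK).mpr h)) hσ
    have hd1bot : Tendsto d1 (nhdsWithin 0 (Set.Ioi 0)) atBot := by
      refine Tendsto.congr' (Filter.EventuallyEq.symm hrep) ?_
      exact Tendsto.atBot_add (hinv.const_mul_atTop_of_neg hLneg) hterm2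
    have hd2bot : Tendsto d2 (nhdsWithin 0 (Set.Ioi 0)) atBot := by
      have : Tendsto (fun τ => d1 τ + -(σ * Real.sqrt τ)) (nhdsWithin 0 (Set.Ioi 0)) atBot :=
        Tendsto.atBot_add hd1bot hσs
      exact this.congr fun τ => by rw [hd2]; ring
    refine key 1 0 ?_ ?_ (by rw [min_eq_left h.le]; ring)
    · exact Phi_atTop.comp (tendsto_neg_atBot_atTop.comp hd1bot)
    · exact Phi_atBot.comp hd2bot
  · -- S = K : L = 0, d1 → 0
    have hL0 : L = 0 := by rw [hL, h, div_self hK.ne', Real.log_one]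
    have hd1z : Tendsto d1 (nhdsWithin 0 (Set.Ioi 0)) (nhds 0) := by
      refine Tendsto.congr' (Filter.EventuallyEq.symm hrep) ?_
      have hz : Tendsto (fun τ : ℝ => (L / σ) * (Real.sqrt τ)⁻¹)
          (nhdsWithin 0 (Set.Ioi 0)) (nhds 0) := by
        simp only [hL0, zero_div, zero_mul]
        exact tendsto_const_nhds
      simpa using hz.add hterm2
    have hd2z : Tendsto d2 (nhdsWithin 0 (Set.Ioi 0)) (nhds 0) := by
      have : Tendsto (fun τ => d1 τ + -(σ * Real.sqrt τ)) (nhdsWithin 0 (Set.Ioi 0))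
          (nhds (0 + 0)) := hd1z.add hσs
      refine Tendsto.congr (fun τ => by rw [hd2]) (by simpa only [add_zero, ← sub_eq_add_neg] using this)
    refine key (1/2) (1/2) ?_ ?_ ?_
    · have hneg : Tendsto (fun τ => -(d1 τ)) (nhdsWithin 0 (Set.Ioi 0)) (nhds 0) := by
        simpa using hd1z.neg
      have := (Phi_continuous.tendsto 0).comp hneg
      simpa [Phi_zero, Function.comp_def] using this
    · have := (Phi_continuous.tendsto 0).comp hd2z
      simpa [Phi_zero, Function.comp_def] using this
    · rw [min_eq_left h.le, ← h]; ring
  · -- S > K : L > 0, d1 → ∞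
    have hLpos : 0 < L / σ := div_pos (Real.log_pos ((one_lt_div hK).mpr h)) hσ
    have hd1top : Tendsto d1 (nhdsWithin 0 (Set.Ioi 0)) atTop := by
      refine Tendsto.congr' (Filter.EventuallyEq.symm hrep) ?_
      exact Tendsto.atTop_add (hinv.const_mul_atTop hLpos) hterm2
    have hd2top : Tendsto d2 (nhdsWithin 0 (Set.Ioi 0)) atTop := by
      have : Tendsto (fun τ => d1 τ + -(σ * Real.sqrt τ)) (nhdsWithin 0 (Set.Ioi 0)) atTop :=
        Tendsto.atTop_add hd1top hσs
      exact this.congr fun τ => by rw [hd2]; ring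
    refine key 0 1 ?_ ?_ (by rw [min_eq_right h.le]; ring)
    · exact Phi_atBot.comp (tendsto_neg_atTop_atBot.comp hd1top)
    · exact Phi_atTop.comp hd2top
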